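/- Supermartingale Rule with constant probability and decrease (adapted from McIver–Morgan–Kaminski–Katoen): Let (M_n)_{n∈ℕ} be an adapted, integrable real-valued process on a filtered probability space with M_n ≥ 0 P-almost surely for every n, and let T be a stopping time. Suppose there are constants p ∈ (0,1] and d > 0 such that for every n ∈ ℕ, P-almost everywhere on the event {T > n}: (i) M_n > 0; (ii) P(M_{n+1} − M_n ≤ −d | ℱ_n) ≥ p; and (iii) E(M_{n+1} | ℱ_n) ≤ M_n. Then P(T < ∞) = 1 (almost sure termination). -/

import Mathlib

open MeasureTheory Filter
open scoped ENNReal NNReal Topology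

/-- **Supermartingale Rule with constant probability and decrease.** If `(M n)` is an
adapted integrable nonnegative process, `T` a stopping time, and there are constants
`p ∈ (0,1]` and `d > 0` such that on `{T > n}` the process is positive, decreases by at
least `d` with conditional probability at least `p`, and is a supermartingale, then
`P(T < ∞) = 1` (almost sure termination). -/
theorem supermartingale_rule
    {Ω : Type*} {mΩ : MeasurableSpace Ω} {P : Measure Ω} [IsProbabilityMeasure P]
    (ℱ : Filtration ℕ mΩ) (M : ℕ → Ω → ℝ) (T : Ω → ℕ∞)
    (hAdapted : Adapted ℱ M) (hInt : ∀ n, Integrable (M n) P)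
    (hNonneg : ∀ n : ℕ, ∀ᵐ ω ∂P, 0 ≤ M n ω)
    (hStop : ∀ n : ℕ, MeasurableSet[ℱ n] {ω | T ω ≤ (n : ℕ∞)})
    (p d : ℝ) (hp0 : 0 < p) (hp1 : p ≤ 1) (hd : 0 < d)
    (hPos : ∀ n : ℕ, ∀ᵐ ω ∂P, (n : ℕ∞) < T ω → 0 < M n ω)
    (hDec : ∀ n : ℕ, ∀ᵐ ω ∂P, (n : ℕ∞) < T ω →
      p ≤ (P[Set.indicator {ω' | M (n + 1) ω' - M n ω' ≤ -d} (fun _ => (1 : ℝ))|ℱ n]) ω)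
    (hSM : ∀ n : ℕ, ∀ᵐ ω ∂P, (n : ℕ∞) < T ω → (P[M (n + 1)|ℱ n]) ω ≤ M n ω) :
    P {ω | T ω < ⊤} = 1 := by
  classical
  -- the events `{T > n}`
  set G : ℕ → Set Ω := fun n => {ω | (n : ℕ∞) < T ω} with hGdef
  have hGmeas : ∀ n, MeasurableSet[ℱ n] (G n) := by
    intro n
    have h := (hStop n).compl
    have : {ω | T ω ≤ (n : ℕ∞)}ᶜ = G n := by
      ext ω; simp [G, not_le]
    rwa [this] at h
  have hGmeas' : ∀ n, MeasurableSet (G n) := fun n => ℱ.le n _ (hGmeas n)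
  have hGanti : ∀ n ω, ω ∈ G (n + 1) → ω ∈ G n := by
    intro n ω hω
    have h1 : (n : ℕ∞) < ((n + 1 : ℕ) : ℕ∞) := by exact_mod_cast Nat.lt_succ_self n
    exact lt_trans h1 hω
  -- increments of the stopped process
  set ξ : ℕ → Ω → ℝ := fun n => (G n).indicator (fun ω => M (n + 1) ω - M n ω) with hξdef
  have hξint : ∀ n, Integrable (ξ n) P := fun n =>
    (((hInt (n + 1)).sub (hInt n)).indicator (hGmeas' n))
  have hξmeas : ∀ n, StronglyMeasurable[ℱ (n + 1)] (ξ n) := fun n =>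
    ((hAdapted (n + 1)).stronglyMeasurable.sub ((hAdapted n).stronglyMeasurable.mono (ℱ.mono n.le_succ))).indicator
      ((ℱ.mono n.le_succ) _ (hGmeas n))
  -- the stopped process
  set N : ℕ → Ω → ℝ := fun n ω => M 0 ω + ∑ k ∈ Finset.range n, ξ k ω with hNdef
  have hNsucc : ∀ n ω, N (n + 1) ω = N n ω + ξ n ω := by
    intro n ω; simp [N, Finset.sum_range_succ, add_assoc]
  have hNadp : StronglyAdapted ℱ N := by
    intro n
    refine ((hAdapted 0).stronglyMeasurable.mono (ℱ.mono (Nat.zero_le n))).add ?_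
    refine Finset.stronglyMeasurable_fun_sum _ fun k hk => ?_
    exact (hξmeas k).mono (ℱ.mono (Finset.mem_range.mp hk))
  have hNint : ∀ n, Integrable (N n) P := fun n =>
    (hInt 0).add (integrable_finset_sum _ fun k _ => hξint k)
  -- `N` is pointwise always equal to some `M k`, and equals `M n` on `G n`
  have hKey : ∀ ω n, (∃ k, N n ω = M k ω) ∧ (ω ∈ G n → N n ω = M n ω) := by
    intro ω n
    induction n with
    | zero =>
      have h0 : N 0 ω = M 0 ω := by simp [N]
      exact ⟨⟨0, h0⟩, fun _ => h0⟩
    | succ n ih =>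
      by_cases hω : ω ∈ G n
      · have h1 : N (n + 1) ω = M (n + 1) ω := by
          rw [hNsucc, ih.2 hω]
          simp [ξ, Set.indicator_of_mem hω]
        exact ⟨⟨n + 1, h1⟩, fun _ => h1⟩
      · have h1 : N (n + 1) ω = N n ω := by
          rw [hNsucc]
          simp [ξ, Set.indicator_of_notMem hω]
        obtain ⟨k, hk⟩ := ih.1
        exact ⟨⟨k, h1.trans hk⟩, fun hmem => absurd (hGanti n ω hmem) hω⟩
  -- `N` is a supermartingale
  have hSuper : Supermartingale N ℱ P := by
    refine supermartingale_nat hNadp hNint fun n => ?_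
    have e1 : N (n + 1) = N n + ξ n := by
      funext ω; exact hNsucc n ω
    have e2 : P[N (n + 1)|ℱ n] =ᵐ[P] P[N n|ℱ n] + P[ξ n|ℱ n] := by
      rw [e1]; exact condExp_add (hNint n) (hξint n) _
    have e3 : P[N n|ℱ n] = N n :=
      condExp_of_stronglyMeasurable (ℱ.le n) (hNadp n) (hNint n)
    have e4 : P[ξ n|ℱ n] =ᵐ[P]
        (G n).indicator (P[fun ω => M (n + 1) ω - M n ω|ℱ n]) :=
      condExp_indicator ((hInt (n + 1)).sub (hInt n)) (hGmeas n)
    have e5 : P[fun ω => M (n + 1) ω - M n ω|ℱ n] =ᵐ[P]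
        P[M (n + 1)|ℱ n] - M n := by
      have := condExp_sub (m := ℱ n) (μ := P) (hInt (n + 1)) (hInt n)
      have e6 : P[M n|ℱ n] = M n :=
        condExp_of_stronglyMeasurable (ℱ.le n) (hAdapted n).stronglyMeasurable (hInt n)
      calc P[fun ω => M (n + 1) ω - M n ω|ℱ n] = P[M (n + 1) - M n|ℱ n] := rfl
        _ =ᵐ[P] P[M (n + 1)|ℱ n] - P[M n|ℱ n] := this
        _ = P[M (n + 1)|ℱ n] - M n := by rw [e6]
    filter_upwards [e2, e4, e5, hSM n] with ω h2 h4 h5 hsm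
    rw [h2, Pi.add_apply, e3, h4]
    by_cases hω : ω ∈ G n
    · rw [Set.indicator_of_mem hω, h5, Pi.sub_apply]
      have := hsm hω
      linarith
    · rw [Set.indicator_of_notMem hω]
      simp
  -- a.e. nonnegativity of N
  have hNonneg' : ∀ᵐ ω ∂P, ∀ n, 0 ≤ N n ω := by
    filter_upwards [ae_all_iff.2 hNonneg] with ω hω n
    obtain ⟨k, hk⟩ := (hKey ω n).1
    rw [hk]; exact hω k
  -- L¹ boundedness of N
  set R : ℝ≥0 := (∫ ω, M 0 ω ∂P).toNNReal with hRdef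
  have hbdd : ∀ n, eLpNorm (N n) 1 P ≤ (R : ℝ≥0∞) := by
    intro n
    have hle : ∫ ω, N n ω ∂P ≤ ∫ ω, M 0 ω ∂P := by
      have h1 : P[N n|ℱ 0] ≤ᵐ[P] N 0 := hSuper.2.1 0 n (Nat.zero_le n)
      have h2 : ∫ ω, (P[N n|ℱ 0]) ω ∂P = ∫ ω, N n ω ∂P :=
        integral_condExp (ℱ.le 0)
      have h3 : ∫ ω, (P[N n|ℱ 0]) ω ∂P ≤ ∫ ω, N 0 ω ∂P :=
        integral_mono_ae integrable_condExp (hNint 0) h1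
      have h4 : ∫ ω, N 0 ω ∂P = ∫ ω, M 0 ω ∂P := by
        apply integral_congr_ae; filter_upwards with ω; simp [N]
      rw [h2] at h3; rw [← h4]; exact h3
    have habs : ∫ ω, ‖N n ω‖ ∂P = ∫ ω, N n ω ∂P := by
      apply integral_congr_ae
      filter_upwards [hNonneg'] with ω hω
      exact Real.norm_of_nonneg (hω n)
    have h5 : eLpNorm (N n) 1 P = ENNReal.ofReal (∫ ω, ‖N n ω‖ ∂P) := by
      rw [eLpNorm_one_eq_lintegral_enorm,
        ofReal_integral_norm_eq_lintegral_enorm (hNint n)]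
    rw [h5, habs]
    have : (R : ℝ≥0∞) = ENNReal.ofReal (∫ ω, M 0 ω ∂P) := rfl
    rw [this]
    exact ENNReal.ofReal_le_ofReal hle
  -- a.e. convergence of N
  have hconv : ∀ᵐ ω ∂P, ∃ c, Tendsto (fun n => N n ω) atTop (𝓝 c) := by
    have hsub : Submartingale (-N) ℱ P := hSuper.neg
    have hbdd' : ∀ n, eLpNorm ((-N) n) 1 P ≤ (R : ℝ≥0∞) := by
      intro n
      have : (-N) n = -(N n) := rfl
      rw [this, eLpNorm_neg]
      exact hbdd n
    filter_upwards [hsub.exists_ae_tendsto_of_bdd hbdd'] with ω ⟨c, hc⟩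
    refine ⟨-c, ?_⟩
    have : (fun n => N n ω) = fun n => -((-N) n ω) := by funext n; simp
    rw [this]
    exact hc.neg
  -- the decrease events for Borel–Cantelli
  set D : ℕ → Set Ω := fun n => {ω | M (n + 1) ω - M n ω ≤ -d} with hDdef
  have hDmeas : ∀ n, MeasurableSet[ℱ (n + 1)] (D n) := by
    intro n
    have hf : StronglyMeasurable[ℱ (n + 1)] (fun ω => M (n + 1) ω - M n ω) :=
      (hAdapted (n + 1)).stronglyMeasurable.sub ((hAdapted n).stronglyMeasurable.mono (ℱ.mono n.le_succ))
    exact measurableSet_le hf.measurable (@measurable_const ℝ Ω _ (ℱ (n + 1)) (-d))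
  set s : ℕ → Set Ω := fun n => Nat.casesOn n ∅ (fun k => G k ∩ D k) with hsdef
  have hs : ∀ n, MeasurableSet[ℱ n] (s n) := by
    intro n
    cases n with
    | zero => exact @MeasurableSet.empty _ (ℱ 0)
    | succ k => exact ((ℱ.mono k.le_succ) _ (hGmeas k)).inter (hDmeas k)
  -- conditional probability lower bound
  have hcond : ∀ k, ∀ᵐ ω ∂P, ω ∈ G k →
      p ≤ (P[(s (k + 1)).indicator (1 : Ω → ℝ)|ℱ k]) ω := by
    intro k
    have h1 : (s (k + 1)).indicator (1 : Ω → ℝ) =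
        (G k).indicator ((D k).indicator (1 : Ω → ℝ)) := by
      rw [Set.indicator_indicator]
    have h2 : P[(G k).indicator ((D k).indicator (1 : Ω → ℝ))|ℱ k] =ᵐ[P]
        (G k).indicator (P[(D k).indicator (1 : Ω → ℝ)|ℱ k]) :=
      condExp_indicator ((integrable_const (1 : ℝ)).indicator (ℱ.le (k + 1) _ (hDmeas k)))
        (hGmeas k)
    filter_upwards [h2, hDec k] with ω h2ω hDecω hmem
    rw [h1, h2ω, Set.indicator_of_mem hmem]
    exact hDecω hmem
  -- Borel–Cantelli
  have hBC := MeasureTheory.ae_mem_limsup_atTop_iff P hs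
  -- the event `{T = ∞}`
  set A : Set Ω := {ω | ∀ n, ω ∈ G n} with hAdef
  have hnull : ∀ᵐ ω ∂P, ω ∉ A := by
    filter_upwards [hconv, hBC, ae_all_iff.2 hcond] with ω hconvω hBCω hcondω
    intro hA
    -- the conditional sums diverge at ω
    have hsum : Tendsto (fun n => ∑ k ∈ Finset.range n,
        (P[(s (k + 1)).indicator (1 : Ω → ℝ)|ℱ k]) ω) atTop atTop := by
      refine tendsto_atTop_mono (f := fun n : ℕ => (n : ℝ) * p) (fun n => ?_) ?_
      · calc (n : ℝ) * p = ∑ _k ∈ Finset.range n, p := by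
              rw [Finset.sum_const, Finset.card_range, nsmul_eq_mul]
          _ ≤ _ := Finset.sum_le_sum fun k _ => hcondω k (hA k)
      · exact Tendsto.atTop_mul_const hp0 tendsto_natCast_atTop_atTop
    have hlim : ω ∈ limsup s atTop := hBCω.mpr hsum
    rw [mem_limsup_iff_frequently_mem] at hlim
    -- convergence gives small increments eventually
    obtain ⟨c, hc⟩ := hconvω
    have hdiff : Tendsto (fun n => N (n + 1) ω - N n ω) atTop (𝓝 0) := by
      have := (hc.comp (tendsto_add_atTop_nat 1)).sub hc
      simpa using this
    have hev : ∀ᶠ n in atTop, |N (n + 1) ω - N n ω| < d := by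
      have h := Metric.tendsto_nhds.mp hdiff d hd
      filter_upwards [h] with n hn
      simpa [Real.dist_eq] using hn
    obtain ⟨K, hK⟩ := eventually_atTop.mp hev
    obtain ⟨n, hmem, hn⟩ := (hlim.and_eventually (eventually_ge_atTop (K + 1))).exists
    cases n with
    | zero => exact absurd hn (Nat.not_succ_le_zero K)
    | succ m =>
      have hdec : M (m + 1) ω - M m ω ≤ -d := hmem.2
      have h1 : |N (m + 1) ω - N m ω| < d := hK m (Nat.succ_le_succ_iff.mp hn)
      rw [(hKey ω (m + 1)).2 (hA (m + 1)), (hKey ω m).2 (hA m)] at h1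
      have h2 : d ≤ |M (m + 1) ω - M m ω| := by
        have := neg_le_abs (M (m + 1) ω - M m ω)
        linarith
      linarith
  -- conclude
  have hAmeas : MeasurableSet A := by
    have : A = ⋂ n, G n := by ext ω; simp [A, Set.mem_iInter]
    rw [this]
    exact MeasurableSet.iInter fun n => hGmeas' n
  have hPA : P A = 0 := by
    have h := ae_iff.mp hnull
    simpa using h
  have hTset : {ω | T ω < ⊤} = Aᶜ := by
    ext ω
    simp only [Set.mem_setOf_eq, Set.mem_compl_iff, A, G, not_forall]
    constructor
    · intro h
      obtain ⟨m, hm⟩ := WithTop.ne_top_iff_exists.mp h.ne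
      exact ⟨m, by rw [← hm]; exact lt_irrefl _⟩
    · intro ⟨n, hn⟩
      have hle : T ω ≤ (n : ℕ∞) := not_lt.mp hn
      exact lt_of_le_of_lt hle (WithTop.coe_lt_top n)
  rw [hTset, prob_compl_eq_one_sub hAmeas, hPA]
  simp
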